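/- Let p be a prime and let G be a finite p-group of nilpotency class exactly 2 such that G' has order p^m, G/G' ≅ C_{p^n1} × C_{p^n2} with 0 < n2 ≤ n1, and the pair (p^(m+n1-s1), p^(m+n2-s2)) is the maximum, with respect to the lexicographical order, of the set of pairs (|g1|,|g2|) where (g1,g2) ranges over all pairs of elements of G such that G/G' is the internal direct product of the cyclic subgroups generated by the images of g1 and g2, with the image of g_i having order p^(n_i). Then the tuple (m,n1,n2,s1,s2) is admissible for p, i.e. it satisfies: (A1) 0 < m and s1 ≤ m, s2 ≤ m ≤ n2 ≤ n1; (A2) n1 - s1 ≥ n2 - s2; (A3) if p = 2 then s1 < n1; (A4) either s1 ≥ s2, or p = 2 and n1 = n2 = m = s2 = s1 + 1. -/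

import Mathlib

open scoped commutatorElement

section CommCalc
variable {G : Type*} [Group G]

lemma aux_mul_comm (hcc : ∀ x y g : G, Commute ⁅x, y⁆ g) (x y : G) :
    y * x = x * y * ⁅y, x⁆ := by
  rw [← (hcc y x (x * y)).eq, commutatorElement_def]; group

lemma aux_comm_mul_left (hcc : ∀ x y g : G, Commute ⁅x, y⁆ g) (x y z : G) :
    ⁅x * y, z⁆ = ⁅x, z⁆ * ⁅y, z⁆ :=
  calc ⁅x * y, z⁆ = x * ⁅y, z⁆ * z * x⁻¹ * z⁻¹ := by
        rw [commutatorElement_def (x*y) z, commutatorElement_def y z]; group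
    _ = ⁅y, z⁆ * (x * z * x⁻¹ * z⁻¹) := by rw [← (hcc y z x).eq]; group
    _ = ⁅y, z⁆ * ⁅x, z⁆ := by rw [commutatorElement_def x z]
    _ = ⁅x, z⁆ * ⁅y, z⁆ := (hcc y z _).eq

lemma aux_comm_pow_left (hcc : ∀ x y g : G, Commute ⁅x, y⁆ g) (x y : G) (k : ℕ) :
    ⁅x ^ k, y⁆ = ⁅x, y⁆ ^ k := by
  induction k with
  | zero => simp
  | succ k ih => rw [pow_succ, aux_comm_mul_left hcc, ih, pow_succ]

lemma aux_comm_inv_left (hcc : ∀ x y g : G, Commute ⁅x, y⁆ g) (x y : G) :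
    ⁅x⁻¹, y⁆ = ⁅x, y⁆⁻¹ := by
  have h := aux_comm_mul_left hcc x⁻¹ x y
  simp at h
  exact eq_inv_of_mul_eq_one_left h.symm

lemma aux_comm_zpow_left (hcc : ∀ x y g : G, Commute ⁅x, y⁆ g) (x y : G) (k : ℤ) :
    ⁅x ^ k, y⁆ = ⁅x, y⁆ ^ k := by
  cases k with
  | ofNat n => simpa using aux_comm_pow_left hcc x y n
  | negSucc n =>
    rw [zpow_negSucc, zpow_negSucc, aux_comm_inv_left hcc, aux_comm_pow_left hcc]

lemma aux_comm_zpow_right (hcc : ∀ x y g : G, Commute ⁅x, y⁆ g) (x y : G) (k : ℤ) :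
    ⁅x, y ^ k⁆ = ⁅x, y⁆ ^ k := by
  rw [← commutatorElement_inv, aux_comm_zpow_left hcc, ← inv_zpow, commutatorElement_inv]

lemma aux_comm_pow_right (hcc : ∀ x y g : G, Commute ⁅x, y⁆ g) (x y : G) (k : ℕ) :
    ⁅x, y ^ k⁆ = ⁅x, y⁆ ^ k := by
  rw [← commutatorElement_inv, aux_comm_pow_left hcc, ← inv_pow, commutatorElement_inv]

lemma aux_comm_mul_right (hcc : ∀ x y g : G, Commute ⁅x, y⁆ g) (z x y : G) :
    ⁅z, x * y⁆ = ⁅z, x⁆ * ⁅z, y⁆ := by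
  calc ⁅z, x * y⁆ = ⁅x * y, z⁆⁻¹ := (commutatorElement_inv (x*y) z).symm
    _ = (⁅x, z⁆ * ⁅y, z⁆)⁻¹ := by rw [aux_comm_mul_left hcc]
    _ = ⁅y, z⁆⁻¹ * ⁅x, z⁆⁻¹ := mul_inv_rev _ _
    _ = ⁅z, y⁆ * ⁅z, x⁆ := by rw [commutatorElement_inv, commutatorElement_inv]
    _ = ⁅z, x⁆ * ⁅z, y⁆ := (hcc z y _).eq.symm ▸ (hcc z y ⁅z, x⁆).eq.symm

lemma aux_mul_pow (hcc : ∀ x y g : G, Commute ⁅x, y⁆ g) (x y : G) (k : ℕ) :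
    (x * y) ^ k = x ^ k * y ^ k * ⁅y, x⁆ ^ (k.choose 2) := by
  induction k with
  | zero => simp
  | succ k ih =>
    have hch : (k+1).choose 2 = k.choose 2 + k := by
      rw [Nat.choose_succ_succ]; simp [Nat.choose_one_right]; ring
    rw [pow_succ, ih, hch]
    have e1 : x^k * y^k * ⁅y,x⁆^(k.choose 2) * (x*y) = x^k * (y^k * x) * y * ⁅y,x⁆^(k.choose 2) := by
      rw [mul_assoc (x^k * y^k), ((hcc y x (x*y)).pow_left (k.choose 2)).eq]; group
    have e2 : y^k * x = x * y^k * ⁅y,x⁆^k := by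
      rw [aux_mul_comm hcc x (y^k), aux_comm_pow_left hcc]
    have e4 : ⁅y,x⁆^k * y = y * ⁅y,x⁆^k := ((hcc y x y).pow_left k).eq
    calc x^k * y^k * ⁅y,x⁆^(k.choose 2) * (x*y)
        = x^k * (x * y^k * ⁅y,x⁆^k) * y * ⁅y,x⁆^(k.choose 2) := by rw [e1, e2]
      _ = x^(k+1) * y^k * (⁅y,x⁆^k * y) * ⁅y,x⁆^(k.choose 2) := by group
      _ = x^(k+1) * y^k * (y * ⁅y,x⁆^k) * ⁅y,x⁆^(k.choose 2) := by rw [e4]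
      _ = x^(k+1) * y^(k+1) * (⁅y,x⁆^k * ⁅y,x⁆^(k.choose 2)) := by group
      _ = x^(k+1) * y^(k+1) * ⁅y,x⁆^(k.choose 2 + k) := by group

end CommCalc

section AbelianPairs
variable {A : Type*} [CommGroup A] {x1 x2 : A} {p n1 n2 : ℕ}

lemma aux_pair_mul
    (hsup : Subgroup.zpowers x1 ⊔ Subgroup.zpowers x2 = ⊤)
    (hinf : Subgroup.zpowers x1 ⊓ Subgroup.zpowers x2 = ⊥)
    (ho1 : orderOf x1 = p ^ n1) (ho2 : orderOf x2 = p ^ n2) (hn : n2 ≤ n1) :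
    Subgroup.zpowers (x1 * x2) ⊔ Subgroup.zpowers x2 = ⊤ ∧
    Subgroup.zpowers (x1 * x2) ⊓ Subgroup.zpowers x2 = ⊥ ∧
    orderOf (x1 * x2) = p ^ n1 := by
  have hd : (p ^ n2 : ℕ) ∣ p ^ n1 := pow_dvd_pow p hn
  refine ⟨?_, ?_, ?_⟩
  · rw [eq_top_iff, ← hsup]
    refine sup_le ?_ ?_
    · rw [Subgroup.zpowers_le]
      have hmem : (x1 * x2) * x2⁻¹ ∈ Subgroup.zpowers (x1 * x2) ⊔ Subgroup.zpowers x2 :=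
        mul_mem (Subgroup.mem_sup_left (Subgroup.mem_zpowers _))
          (inv_mem (Subgroup.mem_sup_right (Subgroup.mem_zpowers _)))
      simpa using hmem
    · rw [Subgroup.zpowers_le]
      exact Subgroup.mem_sup_right (Subgroup.mem_zpowers _)
  · rw [eq_bot_iff]
    intro z hz
    rw [Subgroup.mem_inf, Subgroup.mem_zpowers_iff] at hz
    obtain ⟨⟨k, hk⟩, hz2⟩ := hz
    have hx1k : x1 ^ k = z * x2 ^ (-k) := by
      rw [← hk, mul_zpow, zpow_neg]; group
    have hmem : x1 ^ k ∈ Subgroup.zpowers x1 ⊓ Subgroup.zpowers x2 := by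
      rw [Subgroup.mem_inf]
      constructor
      · exact Subgroup.zpow_mem _ (Subgroup.mem_zpowers _) k
      · rw [hx1k]
        exact mul_mem hz2 (Subgroup.zpow_mem _ (Subgroup.mem_zpowers _) (-k))
    rw [hinf, Subgroup.mem_bot] at hmem
    have hk1 : ((p ^ n1 : ℕ) : ℤ) ∣ k := by
      rwa [← ho1, orderOf_dvd_iff_zpow_eq_one]
    have hk2 : x2 ^ k = 1 := by
      rw [← orderOf_dvd_iff_zpow_eq_one, ho2]
      exact dvd_trans (Int.natCast_dvd_natCast.mpr hd) hk1
    rw [Subgroup.mem_bot, ← hk, mul_zpow, hmem, hk2, one_mul]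
  · have hx1o : x1 ^ (p ^ n1) = 1 := by rw [← ho1, pow_orderOf_eq_one]
    have hx2o : x2 ^ (p ^ n1) = 1 := orderOf_dvd_iff_pow_eq_one.mp (ho2 ▸ hd)
    have h1 : (x1 * x2) ^ (p ^ n1) = 1 := by rw [mul_pow, hx1o, hx2o, one_mul]
    refine Nat.dvd_antisymm (orderOf_dvd_iff_pow_eq_one.mpr h1) ?_
    have h2 : x1 ^ (orderOf (x1 * x2)) = x2⁻¹ ^ (orderOf (x1 * x2)) := by
      have h3 := pow_orderOf_eq_one (x1 * x2)
      rw [mul_pow] at h3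
      rw [inv_pow, eq_inv_iff_mul_eq_one, h3]
    have hmem : x1 ^ (orderOf (x1 * x2)) ∈ Subgroup.zpowers x1 ⊓ Subgroup.zpowers x2 := by
      rw [Subgroup.mem_inf]
      constructor
      · exact Subgroup.pow_mem _ (Subgroup.mem_zpowers _) _
      · rw [h2]
        exact Subgroup.pow_mem _ (inv_mem (Subgroup.mem_zpowers _)) _
    rw [hinf, Subgroup.mem_bot] at hmem
    rw [← ho1]
    exact orderOf_dvd_of_pow_eq_one hmem

lemma aux_pair_adjust
    (hsup : Subgroup.zpowers x1 ⊔ Subgroup.zpowers x2 = ⊤)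
    (hinf : Subgroup.zpowers x1 ⊓ Subgroup.zpowers x2 = ⊥)
    (ho1 : orderOf x1 = p ^ n1) (ho2 : orderOf x2 = p ^ n2) (hn : n2 ≤ n1) :
    Subgroup.zpowers x1 ⊔ Subgroup.zpowers (x2 * x1 ^ (p ^ (n1 - n2))) = ⊤ ∧
    Subgroup.zpowers x1 ⊓ Subgroup.zpowers (x2 * x1 ^ (p ^ (n1 - n2))) = ⊥ ∧
    orderOf (x2 * x1 ^ (p ^ (n1 - n2))) = p ^ n2 := by
  set u : ℕ := p ^ (n1 - n2) with hu
  have hun : u * p ^ n2 = p ^ n1 := by rw [hu, ← pow_add]; congr 1; omega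
  have hx1u : (x1 ^ u) ^ (p ^ n2) = 1 := by
    rw [← pow_mul, hun, ← ho1, pow_orderOf_eq_one]
  refine ⟨?_, ?_, ?_⟩
  · rw [eq_top_iff, ← hsup]
    refine sup_le ?_ ?_
    · rw [Subgroup.zpowers_le]
      exact Subgroup.mem_sup_left (Subgroup.mem_zpowers _)
    · rw [Subgroup.zpowers_le]
      have hmem : (x2 * x1 ^ u) * (x1 ^ u)⁻¹ ∈
          Subgroup.zpowers x1 ⊔ Subgroup.zpowers (x2 * x1 ^ u) :=
        mul_mem (Subgroup.mem_sup_right (Subgroup.mem_zpowers _))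
          (inv_mem (Subgroup.mem_sup_left (Subgroup.pow_mem _ (Subgroup.mem_zpowers _) u)))
      simpa using hmem
  · rw [eq_bot_iff]
    intro z hz
    rw [Subgroup.mem_inf, Subgroup.mem_zpowers_iff (g := x2 * x1 ^ u)] at hz
    obtain ⟨hz1, ⟨k, hk⟩⟩ := hz
    have hx2k : x2 ^ k = z * (x1 ^ ((u : ℤ) * k))⁻¹ := by
      rw [← hk, mul_zpow, zpow_mul, zpow_natCast]; group
    have hmem : x2 ^ k ∈ Subgroup.zpowers x1 ⊓ Subgroup.zpowers x2 := by
      rw [Subgroup.mem_inf]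
      constructor
      · rw [hx2k]
        exact mul_mem hz1 (inv_mem (Subgroup.zpow_mem _ (Subgroup.mem_zpowers _) _))
      · exact Subgroup.zpow_mem _ (Subgroup.mem_zpowers _) k
    rw [hinf, Subgroup.mem_bot] at hmem
    have hk2 : ((p ^ n2 : ℕ) : ℤ) ∣ k := by rwa [← ho2, orderOf_dvd_iff_zpow_eq_one]
    have hx1uk : x1 ^ ((u : ℤ) * k) = 1 := by
      rw [← orderOf_dvd_iff_zpow_eq_one, ho1]
      obtain ⟨t, rfl⟩ := hk2
      have : ((p ^ n1 : ℕ) : ℤ) = (u : ℤ) * ((p ^ n2 : ℕ) : ℤ) := by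
        rw [← hun]; push_cast; ring
      rw [this]
      ring_nf
      exact Dvd.intro t (by ring)
    rw [Subgroup.mem_bot, ← hk, mul_zpow, hmem, one_mul, ← zpow_natCast x1 u, ← zpow_mul]
    exact hx1uk
  · have ho : (x2 * x1 ^ u) ^ (p ^ n2) = 1 := by
      rw [mul_pow, hx1u, mul_one, ← ho2, pow_orderOf_eq_one]
    refine Nat.dvd_antisymm (orderOf_dvd_iff_pow_eq_one.mpr ho) ?_
    set o := orderOf (x2 * x1 ^ u) with hoo
    have h3 := pow_orderOf_eq_one (x2 * x1 ^ u)
    rw [mul_pow] at h3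
    have h2 : x2 ^ o = ((x1 ^ u) ^ o)⁻¹ := by
      rw [eq_inv_iff_mul_eq_one, ← hoo] at *
      exact h3
    have hmem : x2 ^ o ∈ Subgroup.zpowers x1 ⊓ Subgroup.zpowers x2 := by
      rw [Subgroup.mem_inf]
      constructor
      · rw [h2, ← pow_mul]
        exact inv_mem (Subgroup.pow_mem _ (Subgroup.mem_zpowers _) _)
      · exact Subgroup.pow_mem _ (Subgroup.mem_zpowers _) _
    rw [hinf, Subgroup.mem_bot] at hmem
    rw [← ho2]
    exact orderOf_dvd_of_pow_eq_one hmem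

end AbelianPairs

lemma aux_gcd_left {a b : ℕ} (h : a ∣ b) : Nat.gcd a b = a := Nat.gcd_eq_left h
lemma aux_gcd_right {a b : ℕ} (h : b ∣ a) : Nat.gcd a b = b := Nat.gcd_eq_right h

lemma aux_choose_odd {p : ℕ} (hp : p.Prime) (hodd : p ≠ 2) (e : ℕ) :
    p ^ e ∣ (p ^ e).choose 2 := by
  rw [Nat.choose_two_right]
  have hoddp : (p ^ e) % 2 = 1 := Nat.odd_iff.mp ((hp.odd_of_ne_two hodd).pow)
  have h2 : 2 ∣ p ^ e - 1 := by omega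
  rw [Nat.mul_div_assoc _ h2]
  exact dvd_mul_right _ _

lemma aux_choose_two {e : ℕ} (he : 1 ≤ e) :
    (2 ^ e).choose 2 = 2 ^ (e - 1) * (2 ^ e - 1) := by
  rw [Nat.choose_two_right]
  have h : (2:ℕ) ^ e = 2 * 2 ^ (e - 1) := by
    rw [← pow_succ']; congr 1; omega
  rw [h, mul_assoc, Nat.mul_div_cancel_left _ (by norm_num)]

lemma aux_two_not_dvd {m : ℕ} (hm : 1 ≤ m) :
    ¬ (2 ^ m ∣ 2 ^ (m - 1) * (2 ^ m - 1)) := by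
  intro h
  have h2 : (2:ℕ) ^ m = 2 ^ (m-1) * 2 := by rw [← pow_succ]; congr 1; omega
  rw [h2] at h
  have hdvd := (Nat.mul_dvd_mul_iff_left (a := 2^(m-1)) (by positivity)).mp h
  have hge : (2:ℕ) ^ m ≥ 2 := by
    calc (2:ℕ) ^ m ≥ 2 ^ 1 := Nat.pow_le_pow_right (by norm_num) hm
      _ = 2 := by norm_num
  omega

lemma aux_gcd_pow {p : ℕ} (hp : p.Prime) {mm s E : ℕ} (hsm : s < mm)
    (h1 : p ^ s ∣ E) (h2 : ¬ p ^ (s+1) ∣ E) : Nat.gcd (p ^ mm) E = p ^ s := by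
  obtain ⟨t, htd, hte⟩ := (Nat.dvd_prime_pow hp).mp (Nat.gcd_dvd_left (p ^ mm) E)
  have hst : p ^ s ∣ p ^ t := hte ▸ Nat.dvd_gcd (pow_dvd_pow p hsm.le) h1
  have hs_le : s ≤ t := (Nat.pow_dvd_pow_iff_le_right hp.one_lt).mp hst
  have ht_le : t ≤ s := by
    by_contra hc
    push_neg at hc
    exact h2 (dvd_trans (pow_dvd_pow p hc) (hte ▸ Nat.gcd_dvd_right (p ^ mm) E))
  rw [hte]
  congr 1
  omega



/-- A tuple `(m,n1,n2,s1,s2)` is admissible for the prime `p` if: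
(A1) `0 < m` and `s1 ≤ m`, `s2 ≤ m ≤ n2 ≤ n1`;
(A2) `n1 - s1 ≥ n2 - s2` (stated without truncated subtraction);
(A3) if `p = 2` then `s1 < n1`;
(A4) either `s1 ≥ s2`, or `p = 2` and `n1 = n2 = m = s2 = s1 + 1`. -/
def Admissible (p m n1 n2 s1 s2 : ℕ) : Prop :=
  (0 < m ∧ s1 ≤ m ∧ s2 ≤ m ∧ m ≤ n2 ∧ n2 ≤ n1) ∧
  n2 + s1 ≤ n1 + s2 ∧
  (p = 2 → s1 < n1) ∧
  (s2 ≤ s1 ∨ (p = 2 ∧ n1 = n2 ∧ n2 = m ∧ m = s2 ∧ s2 = s1 + 1))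

/-- `GoodPair p n1 n2 g1 g2` says that the images `x1, x2` of `g1, g2` in the
abelianization `G/G'` realize `G/G'` as the internal direct product
`⟨x1⟩ × ⟨x2⟩` with `x_i` of order `p^(n_i)`. -/
def GoodPair (p n1 n2 : ℕ) {G : Type*} [Group G] (g1 g2 : G) : Prop :=
  Subgroup.closure {Abelianization.of g1} ⊔ Subgroup.closure {Abelianization.of g2} = ⊤ ∧
  Subgroup.closure {Abelianization.of g1} ⊓ Subgroup.closure {Abelianization.of g2} = ⊥ ∧
  orderOf (Abelianization.of g1) = p ^ n1 ∧ orderOf (Abelianization.of g2) = p ^ n2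

/-- `(A, B)` is the maximum, in the lexicographic order, of the set of pairs of orders
`(|g1|, |g2|)` where `(g1, g2)` ranges over the pairs with `GoodPair p n1 n2 g1 g2`. -/
def IsLexMaxOrders (G : Type*) [Group G] (p n1 n2 A B : ℕ) : Prop :=
  (∃ b1 b2 : G, GoodPair p n1 n2 b1 b2 ∧ orderOf b1 = A ∧ orderOf b2 = B) ∧
  ∀ g1 g2 : G, GoodPair p n1 n2 g1 g2 →
    orderOf g1 < A ∨ (orderOf g1 = A ∧ orderOf g2 ≤ B)

/-- If `G` is a finite `p`-group of nilpotency class exactly 2 with `|G'| = p^m`,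
`G/G' ≅ C_{p^n1} × C_{p^n2}` (`0 < n2 ≤ n1`), and `(p^(m+n1-s1), p^(m+n2-s2))` is the
lexicographic maximum of the pairs of orders of suitable generating pairs,
then `(m,n1,n2,s1,s2)` is admissible for `p`. -/
theorem invariants_give_admissible_tuple
    (p : ℕ) (hp : p.Prime) (G : Type*) [Group G] [Finite G] (hGp : IsPGroup p G)
    (hclass : commutator G ≤ Subgroup.center G) (hnt : commutator G ≠ ⊥)
    (m n1 n2 s1 s2 : ℕ)
    (hm : Nat.card ↥(commutator G) = p ^ m)
    (hn2 : 0 < n2) (hn12 : n2 ≤ n1)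
    (hab : Nonempty (Abelianization G ≃*
      Multiplicative (ZMod (p ^ n1)) × Multiplicative (ZMod (p ^ n2))))
    (hmax : IsLexMaxOrders G p n1 n2 (p ^ (m + n1 - s1)) (p ^ (m + n2 - s2))) :
    Admissible p m n1 n2 s1 s2 := by
  classical
  have hfact : Fact p.Prime := ⟨hp⟩
  obtain ⟨⟨b1, b2, hgp, hob1, hob2⟩, hmax2⟩ := hmax
  have hsup' : Subgroup.zpowers (Abelianization.of b1) ⊔
      Subgroup.zpowers (Abelianization.of b2) = ⊤ := by
    rw [Subgroup.zpowers_eq_closure, Subgroup.zpowers_eq_closure]; exact hgp.1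
  have hinf' : Subgroup.zpowers (Abelianization.of b1) ⊓
      Subgroup.zpowers (Abelianization.of b2) = ⊥ := by
    rw [Subgroup.zpowers_eq_closure, Subgroup.zpowers_eq_closure]; exact hgp.2.1
  have hox1 := hgp.2.2.1
  have hox2 := hgp.2.2.2
  have hn1pos : 0 < n1 := lt_of_lt_of_le hn2 hn12
  have hcc : ∀ x y g : G, Commute ⁅x, y⁆ g := by
    intro x y g
    have hx : ⁅x, y⁆ ∈ Subgroup.center G :=
      hclass (Subgroup.commutator_mem_commutator (Subgroup.mem_top x) (Subgroup.mem_top y))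
    exact ((Subgroup.mem_center_iff.mp hx) g).symm
  have hker : ∀ g : G, Abelianization.of g = 1 ↔ g ∈ commutator G := fun g =>
    QuotientGroup.eq_one_iff g
  have hGorder : ∀ g : G, ∃ k, orderOf g = p ^ k := (IsPGroup.iff_orderOf).mp hGp
  have hn1e : n1 ≤ m + n1 - s1 := by
    have hdvd1 : p ^ n1 ∣ p ^ (m + n1 - s1) := by
      rw [← hox1, ← hob1]; exact orderOf_map_dvd _ _
    exact (Nat.pow_dvd_pow_iff_le_right hp.one_lt).mp hdvd1
  have hn2e : n2 ≤ m + n2 - s2 := by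
    have hdvd2 : p ^ n2 ∣ p ^ (m + n2 - s2) := by
      rw [← hox2, ← hob2]; exact orderOf_map_dvd _ _
    exact (Nat.pow_dvd_pow_iff_le_right hp.one_lt).mp hdvd2
  have hs1m : s1 ≤ m := by omega
  have hs2m : s2 ≤ m := by omega
  have hm0 : 0 < m := by
    rcases Nat.eq_zero_or_pos m with h0 | h
    · exact absurd (Subgroup.eq_bot_of_card_eq _ (by rw [hm, h0, pow_zero])) hnt
    · exact h
  obtain ⟨c, hc⟩ : ∃ c : G, c = ⁅b1, b2⁆ := ⟨_, rfl⟩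
  have hccen : c ∈ commutator G := hc ▸
    Subgroup.commutator_mem_commutator (Subgroup.mem_top _) (Subgroup.mem_top _)
  have hrepg : ∀ g : G, ∃ (i j : ℤ) (d : G), d ∈ commutator G ∧ g = b1 ^ i * b2 ^ j * d := by
    intro g
    have hg : Abelianization.of g ∈ (⊤ : Subgroup (Abelianization G)) := trivial
    rw [← hsup', Subgroup.mem_sup] at hg
    obtain ⟨y, hy, z, hz, hyz⟩ := hg
    rw [Subgroup.mem_zpowers_iff] at hy hz
    obtain ⟨i, hi⟩ := hy
    obtain ⟨j, hj⟩ := hz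
    refine ⟨i, j, (b1 ^ i * b2 ^ j)⁻¹ * g, ?_, by group⟩
    rw [← hker]
    simp only [map_mul, map_inv, map_zpow]
    rw [hi, hj, hyz]
    group
  have hsub : commutator G ≤ Subgroup.zpowers c := by
    rw [commutator_eq_closure]
    refine (Subgroup.closure_le _).mpr ?_
    rintro w ⟨g, h, rfl⟩
    obtain ⟨i, j, d, hd, rfl⟩ := hrepg g
    obtain ⟨k, l, d', hd', rfl⟩ := hrepg h
    have hdc : ∀ x : G, Commute d x := fun x => ((Subgroup.mem_center_iff.mp (hclass hd)) x).symm
    have hdc' : ∀ x : G, Commute x d' := fun x => (Subgroup.mem_center_iff.mp (hclass hd')) x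
    have hH1 : ⁅b1, b1 ^ k * b2 ^ l * d'⁆ = c ^ l := by
      rw [aux_comm_mul_right hcc, aux_comm_mul_right hcc, aux_comm_zpow_right hcc,
        aux_comm_zpow_right hcc, (hdc' b1).commutator_eq, commutatorElement_self]
      simp [hc]
    have hH2 : ⁅b2, b1 ^ k * b2 ^ l * d'⁆ = (c⁻¹) ^ k := by
      rw [aux_comm_mul_right hcc, aux_comm_mul_right hcc, aux_comm_zpow_right hcc,
        aux_comm_zpow_right hcc, (hdc' b2).commutator_eq, commutatorElement_self]
      have hc2 : ⁅b2, b1⁆ = c⁻¹ := by rw [hc, commutatorElement_inv]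
      rw [hc2]
      simp
    rw [aux_comm_mul_left hcc, aux_comm_mul_left hcc, aux_comm_zpow_left hcc,
      aux_comm_zpow_left hcc, (hdc _).commutator_eq, hH1, hH2, mul_one]
    exact mul_mem (Subgroup.zpow_mem _ (Subgroup.zpow_mem _ (Subgroup.mem_zpowers c) l) i)
      (Subgroup.zpow_mem _ (Subgroup.zpow_mem _ (inv_mem (Subgroup.mem_zpowers c)) k) j)
  have hzc : Subgroup.zpowers c = commutator G :=
    le_antisymm ((Subgroup.zpowers_le).mpr hccen) hsub
  have hoc : orderOf c = p ^ m := by rw [← Nat.card_zpowers, hzc, hm]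
  have hb2n2 : b2 ^ (p ^ n2) ∈ commutator G := by
    rw [← hker, map_pow, ← hox2, pow_orderOf_eq_one]
  have hcb2 : c ^ (p ^ n2) = 1 := by
    rw [hc, ← aux_comm_pow_right hcc]
    exact Commute.commutator_eq ((Subgroup.mem_center_iff.mp (hclass hb2n2)) b1)
  have hmn2 : m ≤ n2 := by
    have hh := orderOf_dvd_iff_pow_eq_one.mpr hcb2
    rw [hoc] at hh
    exact (Nat.pow_dvd_pow_iff_le_right hp.one_lt).mp hh
  have hrep : ∀ (b : G) (n s : ℕ), s ≤ m → orderOf b = p ^ (m + n - s) →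
      orderOf (Abelianization.of b) = p ^ n →
      ∃ j : ℕ, b ^ (p ^ n) = c ^ j ∧ Nat.gcd (p ^ m) j = p ^ s := by
    intro b n s hsm hob hox
    have hne : n ≤ m + n - s := by omega
    have hmem : b ^ (p ^ n) ∈ Subgroup.zpowers c := by
      rw [hzc, ← hker, map_pow, ← hox, pow_orderOf_eq_one]
    rw [← mem_powers_iff_mem_zpowers, Submonoid.mem_powers_iff] at hmem
    obtain ⟨j, hj⟩ := hmem
    refine ⟨j, hj.symm, ?_⟩
    have h1 : orderOf (b ^ (p ^ n)) = p ^ (m - s) := by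
      rw [orderOf_pow, hob, aux_gcd_right (pow_dvd_pow p hne), Nat.pow_div hne hp.pos]
      congr 1
      omega
    have h2 : p ^ m / Nat.gcd (p ^ m) j = p ^ (m - s) := by
      rw [← hoc, ← orderOf_pow, hj, h1]
    have hg : Nat.gcd (p ^ m) j ∣ p ^ m := Nat.gcd_dvd_left _ _
    have h3 : p ^ (m - s) * Nat.gcd (p ^ m) j = p ^ m := by
      rw [← h2, Nat.div_mul_cancel hg]
    have h4 : p ^ (m - s) * p ^ s = p ^ m := by rw [← pow_add]; congr 1; omega
    exact Nat.eq_of_mul_eq_mul_left (pow_pos hp.pos (m - s)) (by rw [h3, h4])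
  have hgp2 : GoodPair p n1 n2 (b1 * b2) b2 := by
    obtain ⟨hs, hi, ho⟩ := aux_pair_mul hsup' hinf' hox1 hox2 hn12
    refine ⟨?_, ?_, ?_, hox2⟩
    · rw [← Subgroup.zpowers_eq_closure, ← Subgroup.zpowers_eq_closure, map_mul]; exact hs
    · rw [← Subgroup.zpowers_eq_closure, ← Subgroup.zpowers_eq_closure, map_mul]; exact hi
    · rw [map_mul]; exact ho
  have hmax1 : ∀ g1 g2 : G, GoodPair p n1 n2 g1 g2 → orderOf g1 ∣ p ^ (m + n1 - s1) := by
    intro g1 g2 hg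
    rcases hmax2 g1 g2 hg with hlt | ⟨heq, _⟩
    · obtain ⟨r, hr⟩ := hGorder g1
      rw [hr] at hlt ⊢
      exact pow_dvd_pow p ((Nat.pow_lt_pow_iff_right hp.one_lt).mp hlt).le
    · exact heq ▸ dvd_refl _
  -- (A3)
  have hA3 : p = 2 → s1 < n1 := by
    intro hp2
    subst hp2
    by_contra hcon
    push_neg at hcon
    have hall : s1 = m ∧ m = n2 ∧ n2 = n1 := by omega
    by_cases hs2 : s2 = m
    · have he1m : m + n1 - s1 = m := by omega
      have he2m : m + n2 - s2 = m := by omega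
      have hb1o : b1 ^ (2 ^ m) = 1 := by
        have h := pow_orderOf_eq_one b1
        rwa [hob1, he1m] at h
      have hb2o : b2 ^ (2 ^ m) = 1 := by
        have h := pow_orderOf_eq_one b2
        rwa [hob2, he2m] at h
      have hpow : (b1 * b2) ^ (2 ^ m) = ⁅b2, b1⁆ ^ ((2 ^ m).choose 2) := by
        rw [aux_mul_pow hcc, hb1o, hb2o, one_mul, one_mul]
      have hCne : ⁅b2, b1⁆ ^ ((2 ^ m).choose 2) ≠ 1 := by
        rw [← commutatorElement_inv, ← hc, inv_pow, ne_eq, inv_eq_one]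
        intro h1
        have h2 := orderOf_dvd_iff_pow_eq_one.mpr h1
        rw [hoc, aux_choose_two hm0] at h2
        exact aux_two_not_dvd hm0 h2
      have hdvd := hmax1 (b1 * b2) b2 hgp2
      rw [he1m] at hdvd
      have h1 : (b1 * b2) ^ (2 ^ m) = 1 := orderOf_dvd_iff_pow_eq_one.mp hdvd
      rw [hpow] at h1
      exact hCne h1
    · have hn2n1 : n2 = n1 := hall.2.2
      have hswap : GoodPair 2 n1 n2 b2 b1 := by
        refine ⟨?_, ?_, ?_, ?_⟩
        · rw [sup_comm]; exact hgp.1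
        · rw [inf_comm]; exact hgp.2.1
        · rw [hox2, hn2n1]
        · rw [hox1, hn2n1]
      have hh := hmax1 b2 b1 hswap
      rw [hob2] at hh
      have hle := (Nat.pow_dvd_pow_iff_le_right hp.one_lt).mp hh
      omega
  -- (A2)
  have hA2 : m + n2 - s2 ≤ m + n1 - s1 := by
    by_contra hcon
    push_neg at hcon
    have he1pos : 1 ≤ m + n1 - s1 := by omega
    have hdvdC : p ^ m ∣ (p ^ (m + n1 - s1)).choose 2 := by
      rcases eq_or_ne p 2 with hp2 | hp2
      · have hs1n1 : s1 < n1 := hA3 hp2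
        rw [hp2]
        rw [aux_choose_two he1pos]
        exact dvd_mul_of_dvd_left (pow_dvd_pow 2 (by omega)) _
      · exact dvd_trans (pow_dvd_pow p (by omega : m ≤ m + n1 - s1))
          (aux_choose_odd hp hp2 _)
    have hcC : c ^ ((p ^ (m + n1 - s1)).choose 2) = 1 := by
      apply orderOf_dvd_iff_pow_eq_one.mp
      rw [hoc]
      exact hdvdC
    have hb1o : b1 ^ (p ^ (m + n1 - s1)) = 1 := by
      rw [← hob1]; exact pow_orderOf_eq_one b1
    have hpow : (b1 * b2) ^ (p ^ (m + n1 - s1)) = b2 ^ (p ^ (m + n1 - s1)) := by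
      rw [aux_mul_pow hcc, hb1o, one_mul, ← commutatorElement_inv, ← hc, inv_pow, hcC,
        inv_one, mul_one]
    have hdvd := hmax1 (b1 * b2) b2 hgp2
    have h1 : (b1 * b2) ^ (p ^ (m + n1 - s1)) = 1 := orderOf_dvd_iff_pow_eq_one.mp hdvd
    rw [hpow] at h1
    have h2 := orderOf_dvd_of_pow_eq_one h1
    rw [hob2] at h2
    have h3 := (Nat.pow_dvd_pow_iff_le_right hp.one_lt).mp h2
    omega
  -- (A4)
  have hA4 : s2 ≤ s1 ∨ (p = 2 ∧ n1 = n2 ∧ n2 = m ∧ m = s2 ∧ s2 = s1 + 1) := by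
    by_cases hs : s2 ≤ s1
    · exact Or.inl hs
    · push_neg at hs
      have hs1m' : s1 < m := lt_of_lt_of_le hs hs2m
      by_cases hexc : p = 2 ∧ s1 + 1 = n1
      · exact Or.inr ⟨hexc.1, by omega, by omega, by omega, by omega⟩
      · exfalso
        obtain ⟨j1, hj1, hg1⟩ := hrep b1 n1 s1 hs1m hob1 hox1
        obtain ⟨j2, hj2, hg2⟩ := hrep b2 n2 s2 hs2m hob2 hox2
        have hkey : p ^ (s1 + 1) ∣ p ^ (n1 - n2) * ((p ^ n2).choose 2) := by
          rcases eq_or_ne p 2 with hp2 | hp2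
          · have h1 : s1 + 1 < n1 := by
              have h2 := hA3 hp2
              rcases Nat.lt_or_ge (s1 + 1) n1 with h | h
              · exact h
              · exact absurd ⟨hp2, by omega⟩ hexc
            rw [hp2]
            rw [aux_choose_two hn2, ← mul_assoc, ← pow_add]
            exact dvd_mul_of_dvd_left (pow_dvd_pow 2 (by omega)) _
          · refine dvd_trans (pow_dvd_pow p (by omega : s1 + 1 ≤ n1)) ?_
            have h5 : p ^ n1 = p ^ (n1 - n2) * p ^ n2 := by rw [← pow_add]; congr 1; omega
            rw [h5]
            exact mul_dvd_mul_left _ (aux_choose_odd hp hp2 n2)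
        have hb1u : (b1 ^ (p ^ (n1 - n2))) ^ (p ^ n2) = b1 ^ (p ^ n1) := by
          rw [← pow_mul, ← pow_add, Nat.sub_add_cancel hn12]
        have hpow : (b2 * b1 ^ (p ^ (n1 - n2))) ^ (p ^ n2)
            = c ^ (j2 + j1 + (p ^ (n1 - n2)) * ((p ^ n2).choose 2)) := by
          rw [aux_mul_pow hcc, hb1u, hj1, hj2, aux_comm_pow_left hcc, ← hc, ← pow_mul,
            ← pow_add, ← pow_add]
        have hj1d : p ^ s1 ∣ j1 := by rw [← hg1]; exact Nat.gcd_dvd_right _ _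
        have hj1nd : ¬ p ^ (s1 + 1) ∣ j1 := by
          intro hcon
          have h1 : p ^ (s1 + 1) ∣ Nat.gcd (p ^ m) j1 :=
            Nat.dvd_gcd (pow_dvd_pow p (by omega)) hcon
          rw [hg1] at h1
          exact absurd ((Nat.pow_dvd_pow_iff_le_right hp.one_lt).mp h1) (by omega)
        have hj2d : p ^ (s1 + 1) ∣ j2 := by
          refine dvd_trans (pow_dvd_pow p (by omega : s1 + 1 ≤ s2)) ?_
          rw [← hg2]; exact Nat.gcd_dvd_right _ _
        have hEd : p ^ s1 ∣ j2 + j1 + (p ^ (n1 - n2)) * ((p ^ n2).choose 2) := by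
          refine dvd_add (dvd_add ?_ hj1d) ?_
          · exact dvd_trans (pow_dvd_pow p (by omega)) hj2d
          · exact dvd_trans (pow_dvd_pow p (by omega)) hkey
        have hEnd : ¬ p ^ (s1 + 1) ∣ j2 + j1 + (p ^ (n1 - n2)) * ((p ^ n2).choose 2) := by
          intro hcon
          have h3 := Nat.dvd_sub hcon (dvd_add hj2d hkey)
          have h4 : j2 + j1 + (p ^ (n1 - n2)) * ((p ^ n2).choose 2)
              - (j2 + (p ^ (n1 - n2)) * ((p ^ n2).choose 2)) = j1 := by omega
          rw [h4] at h3
          exact hj1nd h3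
        have hgcdE := aux_gcd_pow hp hs1m' hEd hEnd
        have hordE : orderOf ((b2 * b1 ^ (p ^ (n1 - n2))) ^ (p ^ n2)) = p ^ (m - s1) := by
          rw [hpow, orderOf_pow, hoc, hgcdE, Nat.pow_div (by omega) hp.pos]
        obtain ⟨r, hr⟩ := hGorder (b2 * b1 ^ (p ^ (n1 - n2)))
        rw [orderOf_pow, hr] at hordE
        have hrn : r = n2 + (m - s1) := by
          rcases le_or_gt r n2 with h | h
          · rw [aux_gcd_left (pow_dvd_pow p h), Nat.div_self (pow_pos hp.pos r)] at hordE
            have h0 : m - s1 = 0 := by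
              by_contra h0
              have h1 : p ^ 1 ≤ p ^ (m - s1) := Nat.pow_le_pow_right hp.pos (by omega)
              rw [← hordE] at h1
              simp at h1
              have := hp.one_lt
              omega
            omega
          · rw [aux_gcd_right (pow_dvd_pow p h.le), Nat.pow_div h.le hp.pos] at hordE
            have h6 := Nat.pow_right_injective hp.two_le hordE
            omega
        have hgp3 : GoodPair p n1 n2 b1 (b2 * b1 ^ (p ^ (n1 - n2))) := by
          obtain ⟨hs3, hi3, ho3⟩ := aux_pair_adjust hsup' hinf' hox1 hox2 hn12
          refine ⟨?_, ?_, hox1, ?_⟩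
          · rw [← Subgroup.zpowers_eq_closure, ← Subgroup.zpowers_eq_closure, map_mul, map_pow]
            exact hs3
          · rw [← Subgroup.zpowers_eq_closure, ← Subgroup.zpowers_eq_closure, map_mul, map_pow]
            exact hi3
          · rw [map_mul, map_pow]; exact ho3
        rcases hmax2 b1 _ hgp3 with hlt | ⟨_, hle⟩
        · rw [hob1] at hlt; exact absurd hlt (lt_irrefl _)
        · rw [hr, hrn] at hle
          have h7 := (Nat.pow_le_pow_iff_right hp.one_lt).mp hle
          omega
  exact ⟨⟨hm0, hs1m, hs2m, hmn2, hn12⟩, by omega, hA3, hA4⟩
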